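/- Let A ⊂ B be full subcategories of an abelian category, both closed under extensions, such that (a) every object of B admits an epimorphism from an object of A with kernel in B, and (b) for any short exact sequence 0 → A' → A → B' → 0 in B with A ∈ A, also A' ∈ A. Then the inclusion induces an isomorphism K_0(A) ≅ K_0(B) of Grothendieck groups. -/

import Mathlib

/-!
STATEMENT 16: Let A ⊂ B be full subcategories of an abelian category, both
closed under extensions, such that (a) every object of B admits an
epimorphism from an object of A with kernel in B, and (b) for any short
exact sequence 0 → A' → A → B' → 0 in B with A ∈ A, also A' ∈ A.  Then the
inclusion induces an isomorphism K₀(A) ≅ K₀(B) (resolution theorem at the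
level of K₀).

The subcategories are encoded by predicates `PA ≤ PB` on objects of the
abelian category C; K₀ of such a subcategory is the free abelian group on
objects satisfying the predicate, modulo the relations [X₂] = [X₁] + [X₃]
for short exact sequences whose three terms satisfy the predicate.
-/

open CategoryTheory CategoryTheory.Limits

/-- K₀ of the full subcategory of an abelian category `C` spanned by a
predicate `P`, presented by generators and short-exact-sequence relations. -/
def K0Sub {C : Type*} [Category C] [Abelian C] (P : C → Prop) : Type _ :=
  FreeAbelianGroup {X : C // P X} ⧸
    AddSubgroup.closure
      {a | ∃ (S : ShortComplex C) (hS : S.ShortExact)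
          (h1 : P S.X₁) (h2 : P S.X₂) (h3 : P S.X₃),
          a = FreeAbelianGroup.of (⟨S.X₂, h2⟩ : {X : C // P X}) -
            FreeAbelianGroup.of ⟨S.X₁, h1⟩ - FreeAbelianGroup.of ⟨S.X₃, h3⟩}

noncomputable instance {C : Type*} [Category C] [Abelian C] (P : C → Prop) :
    AddCommGroup (K0Sub P) :=
  QuotientAddGroup.Quotient.addCommGroup _

section Aux

variable {C : Type*} [Category C] [Abelian C]

/-- The subgroup of relations. -/
def K0Rels (P : C → Prop) : AddSubgroup (FreeAbelianGroup {X : C // P X}) :=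
  AddSubgroup.closure
      {a | ∃ (S : ShortComplex C) (hS : S.ShortExact)
          (h1 : P S.X₁) (h2 : P S.X₂) (h3 : P S.X₃),
          a = FreeAbelianGroup.of (⟨S.X₂, h2⟩ : {X : C // P X}) -
            FreeAbelianGroup.of ⟨S.X₁, h1⟩ - FreeAbelianGroup.of ⟨S.X₃, h3⟩}

/-- Class of a generator. -/
def K0Sub.mk (P : C → Prop) (X : C) (hX : P X) : K0Sub P :=
  QuotientAddGroup.mk (FreeAbelianGroup.of ⟨X, hX⟩)

lemma K0Sub.rel (P : C → Prop) (S : ShortComplex C) (hS : S.ShortExact)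
    (h1 : P S.X₁) (h2 : P S.X₂) (h3 : P S.X₃) :
    K0Sub.mk P S.X₂ h2 = K0Sub.mk P S.X₁ h1 + K0Sub.mk P S.X₃ h3 := by
  have hmem : FreeAbelianGroup.of (⟨S.X₂, h2⟩ : {X : C // P X}) -
      FreeAbelianGroup.of ⟨S.X₁, h1⟩ - FreeAbelianGroup.of ⟨S.X₃, h3⟩ ∈ K0Rels P :=
    AddSubgroup.subset_closure ⟨S, hS, h1, h2, h3, rfl⟩
  have h0 : ((QuotientAddGroup.mk (FreeAbelianGroup.of (⟨S.X₂, h2⟩ : {X : C // P X}) -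
      FreeAbelianGroup.of ⟨S.X₁, h1⟩ - FreeAbelianGroup.of ⟨S.X₃, h3⟩)) :
      FreeAbelianGroup {X : C // P X} ⧸ K0Rels P) = 0 :=
    (QuotientAddGroup.eq_zero_iff _).2 hmem
  rw [QuotientAddGroup.mk_sub, QuotientAddGroup.mk_sub, sub_sub, sub_eq_zero] at h0
  exact h0

/-- Kernel of the first projection of a pullback along an epi. -/
lemma pbFst_shortExact {K A X Y : C} (f : K ⟶ A) (p : A ⟶ X) (w : f ≫ p = 0)
    (hS : (ShortComplex.mk f p w).ShortExact) (t : Y ⟶ X) :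
    (ShortComplex.mk (pullback.lift (0 : K ⟶ Y) f (by simp [w]))
      (pullback.fst t p) (by rw [pullback.lift_fst]) : ShortComplex C).ShortExact := by
  have hm : Mono f := hS.mono_f
  have he : Epi p := hS.epi_g
  have hmf : Mono (ShortComplex.mk f p w).f := hm
  have hmono : Mono (pullback.lift (0 : K ⟶ Y) f (by simp [w] : (0 : K ⟶ Y) ≫ t = f ≫ p)) := by
    have h1 : Mono (pullback.lift (0 : K ⟶ Y) f
        (by simp [w] : (0 : K ⟶ Y) ≫ t = f ≫ p) ≫ pullback.snd t p) := by
      rw [pullback.lift_snd]; exact hm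
    exact mono_of_mono _ (pullback.snd t p)
  have hepi : Epi (pullback.fst t p) := inferInstance
  refine ShortComplex.ShortExact.mk' ?_ hmono hepi
  refine ShortComplex.exact_of_f_is_kernel _ ?_
  have hcond : ∀ {W' : C} (g' : W' ⟶ pullback t p), g' ≫ pullback.fst t p = 0 →
      (g' ≫ pullback.snd t p) ≫ p = 0 := by
    intro W' g' hg'
    rw [Category.assoc, ← pullback.condition, ← Category.assoc, hg', zero_comp]
  refine KernelFork.IsLimit.ofι _ _
    (fun {W'} g' hg' => hS.exact.lift (g' ≫ pullback.snd t p) (hcond g' hg')) ?_ ?_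
  · intro W' g' hg'
    dsimp only at hg' ⊢
    apply pullback.hom_ext
    · rw [Category.assoc, pullback.lift_fst, comp_zero, hg']
    · rw [Category.assoc, pullback.lift_snd]
      exact hS.exact.lift_f _ _
  · intro W' g' hg' m hm'
    dsimp only at hg' hm' ⊢
    rw [← cancel_mono f]
    have h2 : hS.exact.lift (g' ≫ pullback.snd t p) (hcond g' hg') ≫ f = g' ≫ pullback.snd t p :=
      hS.exact.lift_f _ _
    rw [h2]
    calc m ≫ f
        = (m ≫ pullback.lift (0 : K ⟶ Y) f
            (by simp [w] : (0 : K ⟶ Y) ≫ t = f ≫ p)) ≫ pullback.snd t p := by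
          rw [Category.assoc, pullback.lift_snd]
      _ = g' ≫ pullback.snd t p := by rw [hm']

/-- Kernel of the second projection of a pullback along an epi. -/
lemma pbSnd_shortExact {K A X Y : C} (f : K ⟶ A) (p : A ⟶ X) (w : f ≫ p = 0)
    (hS : (ShortComplex.mk f p w).ShortExact) (t : Y ⟶ X) :
    (ShortComplex.mk (pullback.lift f (0 : K ⟶ Y) (by simp [w]))
      (pullback.snd p t) (by rw [pullback.lift_snd]) : ShortComplex C).ShortExact := by
  have hm : Mono f := hS.mono_f
  have he : Epi p := hS.epi_g
  have hmf : Mono (ShortComplex.mk f p w).f := hm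
  have hmono : Mono (pullback.lift f (0 : K ⟶ Y)
      (by simp [w] : f ≫ p = (0 : K ⟶ Y) ≫ t)) := by
    have h1 : Mono (pullback.lift f (0 : K ⟶ Y)
        (by simp [w] : f ≫ p = (0 : K ⟶ Y) ≫ t) ≫ pullback.fst p t) := by
      rw [pullback.lift_fst]; exact hm
    exact mono_of_mono _ (pullback.fst p t)
  have hepi : Epi (pullback.snd p t) := inferInstance
  refine ShortComplex.ShortExact.mk' ?_ hmono hepi
  refine ShortComplex.exact_of_f_is_kernel _ ?_
  have hcond : ∀ {W' : C} (g' : W' ⟶ pullback p t), g' ≫ pullback.snd p t = 0 →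
      (g' ≫ pullback.fst p t) ≫ p = 0 := by
    intro W' g' hg'
    rw [Category.assoc, pullback.condition, ← Category.assoc, hg', zero_comp]
  refine KernelFork.IsLimit.ofι _ _
    (fun {W'} g' hg' => hS.exact.lift (g' ≫ pullback.fst p t) (hcond g' hg')) ?_ ?_
  · intro W' g' hg'
    dsimp only at hg' ⊢
    apply pullback.hom_ext
    · rw [Category.assoc, pullback.lift_fst]
      exact hS.exact.lift_f _ _
    · rw [Category.assoc, pullback.lift_snd, comp_zero, hg']
  · intro W' g' hg' m hm'
    dsimp only at hg' hm' ⊢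
    rw [← cancel_mono f]
    have h2 : hS.exact.lift (g' ≫ pullback.fst p t) (hcond g' hg') ≫ f = g' ≫ pullback.fst p t :=
      hS.exact.lift_f _ _
    rw [h2]
    calc m ≫ f
        = (m ≫ pullback.lift f (0 : K ⟶ Y)
            (by simp [w] : f ≫ p = (0 : K ⟶ Y) ≫ t)) ≫ pullback.fst p t := by
          rw [Category.assoc, pullback.lift_fst]
      _ = g' ≫ pullback.fst p t := by rw [hm']

/-- Pulling back a short exact sequence along an epi `p : A ⟶ X₂`. -/
lemma pbRes_shortExact {X₁ X₂ X₃ A : C} (u : X₁ ⟶ X₂) (v : X₂ ⟶ X₃) (w : u ≫ v = 0)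
    (hT : (ShortComplex.mk u v w).ShortExact) (p : A ⟶ X₂) [Epi p] :
    (ShortComplex.mk (pullback.snd u p) (p ≫ v)
      (by rw [← Category.assoc, ← pullback.condition, Category.assoc, w, comp_zero]) :
        ShortComplex C).ShortExact := by
  have hmu : Mono u := hT.mono_f
  have hev : Epi v := hT.epi_g
  have hmf : Mono (ShortComplex.mk u v w).f := hmu
  have hmono : Mono (pullback.snd u p) := by
    rw [Preadditive.mono_iff_cancel_zero]
    intro Z g hg
    have h1 : (g ≫ pullback.fst u p) ≫ u = 0 := by
      rw [Category.assoc, pullback.condition, ← Category.assoc, hg, zero_comp]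
    have h2 : g ≫ pullback.fst u p = 0 := by
      rw [← cancel_mono u, zero_comp]; exact h1
    apply pullback.hom_ext <;> simp [h2, hg]
  have hepi : Epi (p ≫ v) := epi_comp _ _
  refine ShortComplex.ShortExact.mk' ?_ hmono hepi
  refine ShortComplex.exact_of_f_is_kernel _ ?_
  have hcond : ∀ {W' : C} (g' : W' ⟶ A), g' ≫ (p ≫ v) = 0 → (g' ≫ p) ≫ v = 0 := by
    intro W' g' hg'
    rw [Category.assoc]; exact hg'
  refine KernelFork.IsLimit.ofι _ _
    (fun {W'} g' hg' => pullback.lift (hT.exact.lift (g' ≫ p) (hcond g' hg')) g'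
      (hT.exact.lift_f _ _)) ?_ ?_
  · intro W' g' hg'
    dsimp only at hg' ⊢
    exact pullback.lift_snd _ _ _
  · intro W' g' hg' m hm'
    dsimp only at hg' hm' ⊢
    apply pullback.hom_ext
    · rw [pullback.lift_fst, ← cancel_mono u]
      have h2 : hT.exact.lift (g' ≫ p) (hcond g' hg') ≫ u = g' ≫ p := hT.exact.lift_f _ _
      rw [h2]
      calc (m ≫ pullback.fst u p) ≫ u
          = m ≫ pullback.fst u p ≫ u := Category.assoc _ _ _
        _ = m ≫ pullback.snd u p ≫ p := congrArg (fun t => m ≫ t) pullback.condition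
        _ = (m ≫ pullback.snd u p) ≫ p := (Category.assoc _ _ _).symm
        _ = g' ≫ p := by rw [hm']
    · rw [pullback.lift_snd]; exact hm'

end Aux

theorem stmt_16 {C : Type*} [Category C] [Abelian C]
    (PA PB : C → Prop) (hsub : ∀ X, PA X → PB X)
    -- both closed under extensions
    (hextA : ∀ S : ShortComplex C, S.ShortExact → PA S.X₁ → PA S.X₃ → PA S.X₂)
    (hextB : ∀ S : ShortComplex C, S.ShortExact → PB S.X₁ → PB S.X₃ → PB S.X₂)
    -- (a) every object of B admits an epimorphism from an object of A with
    -- kernel in B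
    (ha : ∀ X : C, PB X → ∃ (A₀ : C) (_ : PA A₀) (p : A₀ ⟶ X),
      Epi p ∧ PB (kernel p))
    -- (b) for any short exact sequence 0 → A' → A → B' → 0 in B with A in A,
    -- also A' in A
    (hb : ∀ S : ShortComplex C, S.ShortExact → PB S.X₁ → PB S.X₂ → PB S.X₃ →
      PA S.X₂ → PA S.X₁) :
    -- the inclusion induces an isomorphism K₀(A) ≅ K₀(B)
    ∃ e : K0Sub PA ≃+ K0Sub PB,
      ∀ (X : C) (hX : PA X),
        e (QuotientAddGroup.mk (FreeAbelianGroup.of ⟨X, hX⟩)) =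
          QuotientAddGroup.mk (FreeAbelianGroup.of ⟨X, hsub X hX⟩) := by
  classical
  -- every object of B has a two-term resolution by objects of A
  have res : ∀ X : C, PB X → ∃ (K A₀ : C) (f : K ⟶ A₀) (p : A₀ ⟶ X) (w : f ≫ p = 0),
      (ShortComplex.mk f p w).ShortExact ∧ PA K ∧ PA A₀ := by
    intro X hX
    obtain ⟨A₀, hA₀, p, hp, hker⟩ := ha X hX
    have hS : (ShortComplex.mk (kernel.ι p) p (kernel.condition p)).ShortExact := by
      refine ShortComplex.ShortExact.mk' ?_ inferInstance hp
      exact ShortComplex.exact_of_f_is_kernel _ (kernelIsKernel p)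
    exact ⟨kernel p, A₀, kernel.ι p, p, kernel.condition p, hS,
      hb _ hS hker (hsub _ hA₀) hX hA₀, hA₀⟩
  choose Kf Af ff pf wf hSf hKf hAf using res
  -- Schanuel-type independence of resolution
  have schanuel : ∀ {X K A K' A' : C} (f : K ⟶ A) (p : A ⟶ X) (w : f ≫ p = 0)
      (f' : K' ⟶ A') (p' : A' ⟶ X) (w' : f' ≫ p' = 0),
      (ShortComplex.mk f p w).ShortExact → (ShortComplex.mk f' p' w').ShortExact →
      ∀ (hK : PA K) (hA : PA A) (hK' : PA K') (hA' : PA A'),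
      K0Sub.mk PA A hA - K0Sub.mk PA K hK = K0Sub.mk PA A' hA' - K0Sub.mk PA K' hK' := by
    intro X K A K' A' f p w f' p' w' hS hS' hK hA hK' hA'
    have he : Epi p := hS.epi_g
    have he' : Epi p' := hS'.epi_g
    have S1 := pbFst_shortExact f' p' w' hS' p
    have S2 := pbSnd_shortExact f p w hS p'
    have hP : PA (pullback p p') := hextA _ S1 hK' hA
    have r1 := K0Sub.rel PA _ S1 hK' hP hA
    have r2 := K0Sub.rel PA _ S2 hK hP hA'
    rw [r1] at r2
    -- r2 : mk K' + mk A = mk K + mk A'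
    rw [sub_eq_sub_iff_add_eq_add]
    rw [add_comm] at r2
    rw [r2, add_comm]
  -- the map ψ₀ on generators of K₀(B)
  set ψ0 : {X : C // PB X} → K0Sub PA := fun x =>
    K0Sub.mk PA (Af x.1 x.2) (hAf x.1 x.2) - K0Sub.mk PA (Kf x.1 x.2) (hKf x.1 x.2) with hψ0
  -- ψ₀ respects the short exact sequence relations
  have key : ∀ (S : ShortComplex C), S.ShortExact → ∀ (h1 : PB S.X₁) (h2 : PB S.X₂)
      (h3 : PB S.X₃), ψ0 ⟨S.X₂, h2⟩ = ψ0 ⟨S.X₁, h1⟩ + ψ0 ⟨S.X₃, h3⟩ := by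
    intro S hS h1 h2 h3
    set K := Kf S.X₂ h2
    set A := Af S.X₂ h2
    set f := ff S.X₂ h2
    set p := pf S.X₂ h2
    have hSres := hSf S.X₂ h2
    have hK : PA K := hKf S.X₂ h2
    have hA : PA A := hAf S.X₂ h2
    have he : Epi p := hSres.epi_g
    have hT : (ShortComplex.mk S.f S.g S.zero).ShortExact := by
      have : S = ShortComplex.mk S.f S.g S.zero := rfl
      rw [← this]; exact hS
    -- SES 0 → K → P → X₁ → 0 where P = pullback S.f p
    have S1 := pbFst_shortExact f p (wf S.X₂ h2) hSres S.f
    -- SES 0 → P → A → X₃ → 0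
    have S2 := pbRes_shortExact S.f S.g S.zero hT p
    have hPB : PB (pullback S.f p) := hextB _ S1 (hsub _ hK) h1
    have hPA : PA (pullback S.f p) := hb _ S2 hPB (hsub _ hA) h3 hA
    have e1 : ψ0 ⟨S.X₁, h1⟩ = K0Sub.mk PA (pullback S.f p) hPA - K0Sub.mk PA K hK :=
      schanuel (ff S.X₁ h1) (pf S.X₁ h1) (wf S.X₁ h1) _ _ _ (hSf S.X₁ h1) S1
        (hKf S.X₁ h1) (hAf S.X₁ h1) hK hPA
    have e3 : ψ0 ⟨S.X₃, h3⟩ = K0Sub.mk PA A hA - K0Sub.mk PA (pullback S.f p) hPA :=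
      schanuel (ff S.X₃ h3) (pf S.X₃ h3) (wf S.X₃ h3) _ _ _ (hSf S.X₃ h3) S2
        (hKf S.X₃ h3) (hAf S.X₃ h3) hPA hA
    have e2 : ψ0 ⟨S.X₂, h2⟩ = K0Sub.mk PA A hA - K0Sub.mk PA K hK := rfl
    rw [e1, e2, e3]
    abel
  -- the homomorphism Φ : FreeAbelianGroup B → K₀(A)
  set Φ : FreeAbelianGroup {X : C // PB X} →+ K0Sub PA := FreeAbelianGroup.lift ψ0 with hΦ
  have hΦker : K0Rels PB ≤ Φ.ker := by
    refine (AddSubgroup.closure_le _).2 ?_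
    rintro a ⟨S, hS, h1, h2, h3, rfl⟩
    have : Φ (FreeAbelianGroup.of (⟨S.X₂, h2⟩ : {X : C // PB X}) -
        FreeAbelianGroup.of ⟨S.X₁, h1⟩ - FreeAbelianGroup.of ⟨S.X₃, h3⟩) =
        ψ0 ⟨S.X₂, h2⟩ - ψ0 ⟨S.X₁, h1⟩ - ψ0 ⟨S.X₃, h3⟩ := by
      rw [map_sub, map_sub, hΦ, FreeAbelianGroup.lift_apply_of, FreeAbelianGroup.lift_apply_of,
        FreeAbelianGroup.lift_apply_of]
    have hz : ψ0 ⟨S.X₂, h2⟩ - ψ0 ⟨S.X₁, h1⟩ - ψ0 ⟨S.X₃, h3⟩ = 0 := by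
      rw [key S hS h1 h2 h3]; abel
    exact AddMonoidHom.mem_ker.2 (this.trans hz)
  set ψ : K0Sub PB →+ K0Sub PA := QuotientAddGroup.lift (K0Rels PB) Φ hΦker with hψ
  -- the homomorphism Φ' : FreeAbelianGroup A → K₀(B)
  set φ0 : {X : C // PA X} → K0Sub PB := fun x => K0Sub.mk PB x.1 (hsub x.1 x.2) with hφ0
  set Φ' : FreeAbelianGroup {X : C // PA X} →+ K0Sub PB := FreeAbelianGroup.lift φ0 with hΦ'
  have hΦ'ker : K0Rels PA ≤ Φ'.ker := by
    refine (AddSubgroup.closure_le _).2 ?_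
    rintro a ⟨S, hS, h1, h2, h3, rfl⟩
    have : Φ' (FreeAbelianGroup.of (⟨S.X₂, h2⟩ : {X : C // PA X}) -
        FreeAbelianGroup.of ⟨S.X₁, h1⟩ - FreeAbelianGroup.of ⟨S.X₃, h3⟩) =
        φ0 ⟨S.X₂, h2⟩ - φ0 ⟨S.X₁, h1⟩ - φ0 ⟨S.X₃, h3⟩ := by
      rw [map_sub, map_sub, hΦ', FreeAbelianGroup.lift_apply_of, FreeAbelianGroup.lift_apply_of,
        FreeAbelianGroup.lift_apply_of]
    have hz : φ0 ⟨S.X₂, h2⟩ - φ0 ⟨S.X₁, h1⟩ - φ0 ⟨S.X₃, h3⟩ = 0 := by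
      have := K0Sub.rel PB S hS (hsub _ h1) (hsub _ h2) (hsub _ h3)
      rw [hφ0]
      dsimp only
      rw [this]; abel
    exact AddMonoidHom.mem_ker.2 (this.trans hz)
  set φ : K0Sub PA →+ K0Sub PB := QuotientAddGroup.lift (K0Rels PA) Φ' hΦ'ker with hφ
  -- the two composites are the identity
  have hψφ : ψ.comp φ = AddMonoidHom.id (K0Sub PA) := by
    apply QuotientAddGroup.addMonoidHom_ext
    apply FreeAbelianGroup.lift_ext
    intro x
    obtain ⟨X, hX⟩ := x
    show ψ (φ (K0Sub.mk PA X hX)) = K0Sub.mk PA X hX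
    have h1 : φ (K0Sub.mk PA X hX) = K0Sub.mk PB X (hsub X hX) := by
      rw [hφ]
      exact (QuotientAddGroup.lift_mk' (K0Rels PA) hΦ'ker _).trans (FreeAbelianGroup.lift_apply_of _ _)
    rw [h1]
    have h2 : ψ (K0Sub.mk PB X (hsub X hX)) = ψ0 ⟨X, hsub X hX⟩ := by
      rw [hψ]
      exact (QuotientAddGroup.lift_mk' (K0Rels PB) hΦker _).trans (FreeAbelianGroup.lift_apply_of _ _)
    rw [h2]
    have h3 := K0Sub.rel PA _ (hSf X (hsub X hX)) (hKf X (hsub X hX)) (hAf X (hsub X hX)) hX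
    show K0Sub.mk PA (Af X (hsub X hX)) (hAf X (hsub X hX)) -
      K0Sub.mk PA (Kf X (hsub X hX)) (hKf X (hsub X hX)) = K0Sub.mk PA X hX
    rw [h3]
    abel
  have hφψ : φ.comp ψ = AddMonoidHom.id (K0Sub PB) := by
    apply QuotientAddGroup.addMonoidHom_ext
    apply FreeAbelianGroup.lift_ext
    intro x
    obtain ⟨X, hX⟩ := x
    show φ (ψ (K0Sub.mk PB X hX)) = K0Sub.mk PB X hX
    have h2 : ψ (K0Sub.mk PB X hX) = ψ0 ⟨X, hX⟩ := by
      rw [hψ]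
      exact (QuotientAddGroup.lift_mk' (K0Rels PB) hΦker _).trans (FreeAbelianGroup.lift_apply_of _ _)
    rw [h2]
    have hfmk : ∀ (Y : C) (hY : PA Y), φ (K0Sub.mk PA Y hY) = K0Sub.mk PB Y (hsub Y hY) := by
      intro Y hY
      rw [hφ]
      exact (QuotientAddGroup.lift_mk' (K0Rels PA) hΦ'ker _).trans (FreeAbelianGroup.lift_apply_of _ _)
    have : ψ0 ⟨X, hX⟩ = K0Sub.mk PA (Af X hX) (hAf X hX) - K0Sub.mk PA (Kf X hX) (hKf X hX) := rfl
    rw [this, map_sub, hfmk, hfmk]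
    have h3 := K0Sub.rel PB _ (hSf X hX) (hsub _ (hKf X hX)) (hsub _ (hAf X hX)) hX
    rw [h3]
    abel
  refine ⟨AddMonoidHom.toAddEquiv φ ψ hψφ hφψ, ?_⟩
  intro X hX
  show φ (K0Sub.mk PA X hX) = K0Sub.mk PB X (hsub X hX)
  rw [hφ]
  exact (QuotientAddGroup.lift_mk' (K0Rels PA) hΦ'ker _).trans (FreeAbelianGroup.lift_apply_of _ _)
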